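/- Let G_0 be a connected finite simple graph with vertex set V_0 = {v, v_1, …, v_n} and selected vertex v, and for i = 1, …, n let G_i be a finite simple graph with selected vertex v_i, such that distinct graphs G_i and G_j (i, j ≥ 1) share no vertices or edges, and G_i ∩ G_0 = {v_i} for each i ≥ 1. Let G = G_0 ∪ G_1 ∪ ⋯ ∪ G_n. Define f(G_i, v_i, X) := s(G_i, v_i) if v_i ∈ X and f(G_i, v_i, X) := α(G_i) if v_i ∉ X. Then: (1) α(G) = Σ_{V' ⊆ V_0, v ∈ V'} α(G_0(V')) · ∏_{i=1}^n f(G_i, v_i, V'), and (2) β(G, v) = Σ_{V' ⊆ V_0, v ∉ V'} α(G_0(V')) · ∏_{i=1}^n f(G_i, v_i, V'), where G_0(V') denotes the induced subgraph of G_0 on the vertex subset V' (the graph with vertex set V' and all edges of G_0 whose both endpoints lie in V'). -/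

import Mathlib

open SimpleGraph

/-- A "graph inside the ambient vertex type `V`" is a subgraph of the complete graph `⊤`:
it carries its own vertex set `H.verts` and edge set `H.edgeSet`.
`alphaCount H` is its number of edge covers: subsets `E'` of its edge set such that
every vertex of `H` is incident to at least one edge of `E'`. -/
noncomputable def alphaCount {V : Type*} (H : (⊤ : SimpleGraph V).Subgraph) : ℕ :=
  {E' : Set (Sym2 V) | E' ⊆ H.edgeSet ∧ ∀ v ∈ H.verts, ∃ e ∈ E', v ∈ e}.ncard

/-- `β(H, v) = α(H − v)`, the number of edge covers of `H` with the vertex `v`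
(and all incident edges) removed. -/
noncomputable def betaCount {V : Type*} (H : (⊤ : SimpleGraph V).Subgraph) (v : V) : ℕ :=
  alphaCount (H.deleteVerts {v})

/-- `s(H, v) = α(H) + β(H, v)`. -/
noncomputable def sCount {V : Type*} (H : (⊤ : SimpleGraph V).Subgraph) (v : V) : ℕ :=
  alphaCount H + betaCount H v

section Aux

variable {V : Type*} [Fintype V] [DecidableEq V]

/-- edge characterization of induced subgraph -/
lemma mem_edgeSet_induce (K : (⊤ : SimpleGraph V).Subgraph) (s : Set V) (e : Sym2 V) :
    e ∈ (K.induce s).edgeSet ↔ e ∈ K.edgeSet ∧ ∀ u ∈ e, u ∈ s := by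
  induction e with
  | _ a b =>
    simp only [Subgraph.mem_edgeSet, Subgraph.induce_adj, Sym2.mem_iff]
    constructor
    · rintro ⟨ha, hb, h⟩
      exact ⟨h, by rintro u (rfl | rfl) <;> assumption⟩
    · rintro ⟨h, hm⟩
      exact ⟨hm a (Or.inl rfl), hm b (Or.inr rfl), h⟩

lemma mem_edgeSet_deleteVerts (K : (⊤ : SimpleGraph V).Subgraph) (x : V) (e : Sym2 V) :
    e ∈ (K.deleteVerts {x}).edgeSet ↔ e ∈ K.edgeSet ∧ x ∉ e := by
  rw [Subgraph.deleteVerts, mem_edgeSet_induce]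
  constructor
  · rintro ⟨he, hm⟩
    refine ⟨he, fun hx => ?_⟩
    exact (hm x hx).2 rfl
  · rintro ⟨he, hx⟩
    refine ⟨he, fun u hu => ⟨Subgraph.mem_verts_of_mem_edge he hu, fun h => hx (h ▸ hu)⟩⟩

/-- Generic gluing-count lemma. -/
lemma ncard_glue {n : ℕ} (E0 : Set (Sym2 V)) (E : Fin n → Set (Sym2 V))
    (hd0 : ∀ i, E0 ∩ E i = ∅) (hd : ∀ i j, i ≠ j → E i ∩ E j = ∅)
    (P0 : Set (Sym2 V) → Prop) (P : Fin n → Set (Sym2 V) → Prop)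
    (hP0 : ∀ F, P0 F → F ⊆ E0) (hP : ∀ i F, P i F → F ⊆ E i) :
    {E' : Set (Sym2 V) | P0 (E' ∩ E0) ∧ (∀ i, P i (E' ∩ E i)) ∧ E' ⊆ E0 ∪ ⋃ i, E i}.ncard
      = {F | P0 F}.ncard * ∏ i, {F | P i F}.ncard := by
  classical
  have key0 : ∀ (F0 : Set (Sym2 V)) (F : Fin n → Set (Sym2 V)), F0 ⊆ E0 → (∀ i, F i ⊆ E i) →
      (F0 ∪ ⋃ i, F i) ∩ E0 = F0 := by
    intro F0 F h0 h
    ext e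
    simp only [Set.mem_inter_iff, Set.mem_union, Set.mem_iUnion]
    constructor
    · rintro ⟨(hF | ⟨i, hF⟩), hE⟩
      · exact hF
      · exact absurd (Set.mem_inter hE (h i hF)) (by rw [hd0 i]; exact id)
    · intro hF
      exact ⟨Or.inl hF, h0 hF⟩
  have keyi : ∀ (F0 : Set (Sym2 V)) (F : Fin n → Set (Sym2 V)) (i : Fin n),
      F0 ⊆ E0 → (∀ j, F j ⊆ E j) → (F0 ∪ ⋃ j, F j) ∩ E i = F i := by
    intro F0 F i h0 h
    ext e
    simp only [Set.mem_inter_iff, Set.mem_union, Set.mem_iUnion]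
    constructor
    · rintro ⟨(hF | ⟨j, hF⟩), hE⟩
      · exact absurd (Set.mem_inter (h0 hF) hE) (by rw [hd0 i]; exact id)
      · rcases eq_or_ne j i with rfl | hji
        · exact hF
        · exact absurd (Set.mem_inter (h j hF) hE) (by rw [hd j i hji]; exact id)
    · intro hF
      exact ⟨Or.inr ⟨i, hF⟩, h i hF⟩
  rw [← Nat.card_coe_set_eq, ← Nat.card_coe_set_eq]
  have : ∏ i, {F | P i F}.ncard = ∏ i, Nat.card {F | P i F} :=
    Finset.prod_congr rfl fun i _ => (Nat.card_coe_set_eq _).symm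
  rw [this, ← Nat.card_pi, ← Nat.card_prod]
  refine Nat.card_congr ?_
  refine
  { toFun := fun x => ⟨⟨x.1 ∩ E0, x.2.1⟩, fun i => ⟨x.1 ∩ E i, x.2.2.1 i⟩⟩
    invFun := fun y => ⟨y.1.1 ∪ ⋃ i, (y.2 i).1, ?_⟩
    left_inv := ?_
    right_inv := ?_ }
  · have h0 : y.1.1 ⊆ E0 := hP0 _ y.1.2
    have h : ∀ i, (y.2 i).1 ⊆ E i := fun i => hP i _ (y.2 i).2
    refine ⟨?_, ?_, ?_⟩
    · rw [key0 _ _ h0 h]; exact y.1.2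
    · intro i; rw [keyi _ _ i h0 h]; exact (y.2 i).2
    · exact Set.union_subset (h0.trans Set.subset_union_left)
        (Set.iUnion_subset fun i => (h i).trans
          ((Set.subset_iUnion E i).trans Set.subset_union_right))
  · rintro ⟨E', hE'⟩
    apply Subtype.ext
    ext e
    simp only [Set.mem_union, Set.mem_iUnion, Set.mem_inter_iff]
    constructor
    · rintro (⟨he, _⟩ | ⟨i, he, _⟩) <;> exact he
    · intro he
      rcases hE'.2.2 he with h | h
      · exact Or.inl ⟨he, h⟩
      · rcases Set.mem_iUnion.mp h with ⟨i, hi⟩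
        exact Or.inr ⟨i, he, hi⟩
  · rintro ⟨⟨F0, hF0⟩, F⟩
    have h0 : F0 ⊆ E0 := hP0 _ hF0
    have h : ∀ i, (F i).1 ⊆ E i := fun i => hP i _ (F i).2
    refine Prod.ext (Subtype.ext ?_) (funext fun i => Subtype.ext ?_)
    · exact key0 _ _ h0 h
    · exact keyi _ _ i h0 h

/-- `s`-count as covers of all-but-one vertex -/
lemma ncard_cover_except (K : (⊤ : SimpleGraph V).Subgraph) (x : V) (hx : x ∈ K.verts) :
    {F | F ⊆ K.edgeSet ∧ ∀ u ∈ K.verts, u ≠ x → ∃ e ∈ F, u ∈ e}.ncard = sCount K x := by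
  classical
  have hsplit : {F | F ⊆ K.edgeSet ∧ ∀ u ∈ K.verts, u ≠ x → ∃ e ∈ F, u ∈ e}
      = {F : Set (Sym2 V) | F ⊆ K.edgeSet ∧ ∀ u ∈ K.verts, ∃ e ∈ F, u ∈ e}
        ∪ {F | F ⊆ (K.deleteVerts {x}).edgeSet ∧
            ∀ u ∈ (K.deleteVerts {x}).verts, ∃ e ∈ F, u ∈ e} := by
    ext F
    simp only [Set.mem_setOf_eq, Set.mem_union, Subgraph.deleteVerts_verts]
    constructor
    · rintro ⟨hFE, hcov⟩
      by_cases hcx : ∃ e ∈ F, x ∈ e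
      · left
        refine ⟨hFE, fun u hu => ?_⟩
        rcases eq_or_ne u x with rfl | hux
        · exact hcx
        · exact hcov u hu hux
      · right
        refine ⟨fun e he => ?_, fun u hu => ?_⟩
        · rw [mem_edgeSet_deleteVerts]
          exact ⟨hFE he, fun hxe => hcx ⟨e, he, hxe⟩⟩
        · exact hcov u hu.1 (by simpa using hu.2)
    · rintro (⟨hFE, hcov⟩ | ⟨hFE, hcov⟩)
      · exact ⟨hFE, fun u hu _ => hcov u hu⟩
      · refine ⟨fun e he => ((mem_edgeSet_deleteVerts K x e).mp (hFE he)).1, fun u hu hux => ?_⟩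
        exact hcov u ⟨hu, by simpa using hux⟩
  rw [hsplit, sCount, betaCount, alphaCount, alphaCount]
  refine Set.ncard_union_eq ?_ (Set.toFinite _) (Set.toFinite _)
  rw [Set.disjoint_left]
  rintro F ⟨hFE, hcov⟩ ⟨hFE', _⟩
  rcases hcov x hx with ⟨e, he, hxe⟩
  exact ((mem_edgeSet_deleteVerts K x e).mp (hFE' he)).2 hxe

end Aux

section Master

variable {V : Type*} [Fintype V] [DecidableEq V]

noncomputable def suppFinset (E0 E' : Set (Sym2 V)) : Finset V :=
  (Set.toFinite {u | ∃ e ∈ E' ∩ E0, u ∈ e}).toFinset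

lemma mem_suppFinset {E0 E' : Set (Sym2 V)} {u : V} :
    u ∈ suppFinset E0 E' ↔ ∃ e ∈ E' ∩ E0, u ∈ e := by
  rw [suppFinset, Set.Finite.mem_toFinset]; rfl

lemma suppFinset_eq_iff {E0 E' : Set (Sym2 V)} {V' : Finset V} :
    suppFinset E0 E' = V' ↔ {u | ∃ e ∈ E' ∩ E0, u ∈ e} = (↑V' : Set V) := by
  constructor
  · intro h
    rw [← Set.Finite.coe_toFinset (Set.toFinite {u | ∃ e ∈ E' ∩ E0, u ∈ e})]
    exact congrArg _ h
  · intro h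
    apply Finset.coe_injective
    rw [show ((suppFinset E0 E' : Finset V) : Set V) = {u | ∃ e ∈ E' ∩ E0, u ∈ e} from
      Set.Finite.coe_toFinset _, h]

lemma master_count (G₀ : (⊤ : SimpleGraph V).Subgraph) (v : V) (n : ℕ) (w : Fin n → V)
    (hwv : ∀ i, w i ≠ v)
    (hverts : G₀.verts = insert v (Set.range w))
    (H : Fin n → (⊤ : SimpleGraph V).Subgraph)
    (hsel : ∀ i, w i ∈ (H i).verts)
    (hvdisj : ∀ i j, i ≠ j → (H i).verts ∩ (H j).verts = ∅)
    (hedisj : ∀ i j, i ≠ j → (H i).edgeSet ∩ (H j).edgeSet = ∅)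
    (hmeet : ∀ i, (H i).verts ∩ G₀.verts = {w i})
    (c : Prop) [Decidable c] :
    {E' : Set (Sym2 V) | E' ⊆ G₀.edgeSet ∪ ⋃ i, (H i).edgeSet ∧
        (∀ u ∈ G₀.verts ∪ ⋃ i, (H i).verts, u ≠ v → ∃ e ∈ E', u ∈ e) ∧
        (c → ∃ e ∈ E', v ∈ e) ∧ (¬c → ∀ e ∈ E', v ∉ e)}.ncard
      = ∑ V' ∈ (insert v (Finset.image w Finset.univ)).powerset.filter (fun V' => c ↔ v ∈ V'),
          alphaCount (G₀.induce ↑V') *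
            ∏ i, (if w i ∈ V' then sCount (H i) (w i) else alphaCount (H i)) := by
  classical
  -- basic facts
  have hvG : v ∈ G₀.verts := by rw [hverts]; exact Set.mem_insert _ _
  have hwG : ∀ i, w i ∈ G₀.verts := by
    intro i; rw [hverts]; exact Set.mem_insert_of_mem _ ⟨i, rfl⟩
  have hmeet' : ∀ i u, u ∈ (H i).verts → u ∈ G₀.verts → u = w i := by
    intro i u h1 h2
    have : u ∈ (H i).verts ∩ G₀.verts := ⟨h1, h2⟩
    rw [hmeet i] at this; exact this
  have hvH : ∀ i, v ∉ (H i).verts := by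
    intro i hv
    exact hwv i ((hmeet' i v hv hvG).symm)
  have hvE : ∀ i, ∀ e ∈ (H i).edgeSet, v ∉ e := by
    intro i e he hv
    exact hvH i (SimpleGraph.Subgraph.mem_verts_of_mem_edge he hv)
  have hd0E : ∀ i, G₀.edgeSet ∩ (H i).edgeSet = ∅ := by
    intro i
    rw [Set.eq_empty_iff_forall_notMem]
    intro e he
    induction e with
    | _ a b =>
      have h0 : G₀.Adj a b := he.1
      have hi : (H i).Adj a b := he.2
      have ha : a = w i := hmeet' i a (hi.fst_mem) (h0.fst_mem)
      have hb : b = w i := hmeet' i b (hi.snd_mem) ((G₀.adj_symm h0).fst_mem)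
      exact h0.ne (ha.trans hb.symm)
  -- the fiber map
  set E0 : Set (Sym2 V) := G₀.edgeSet with hE0
  set φ : Set (Sym2 V) → Finset V := fun E' => suppFinset E0 E' with hφ
  have hφeq : ∀ E' (V' : Finset V), φ E' = V' ↔ {u | ∃ e ∈ E' ∩ E0, u ∈ e} = (↑V' : Set V) :=
    fun E' V' => suppFinset_eq_iff
  set S : Set (Set (Sym2 V)) :=
    {E' : Set (Sym2 V) | E' ⊆ G₀.edgeSet ∪ ⋃ i, (H i).edgeSet ∧
        (∀ u ∈ G₀.verts ∪ ⋃ i, (H i).verts, u ≠ v → ∃ e ∈ E', u ∈ e) ∧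
        (c → ∃ e ∈ E', v ∈ e) ∧ (¬c → ∀ e ∈ E', v ∉ e)} with hS
  rw [Set.ncard_eq_toFinset_card S (Set.toFinite S)]
  rw [Finset.card_eq_sum_card_fiberwise (f := φ)
    (t := (insert v (Finset.image w Finset.univ)).powerset.filter (fun V' => c ↔ v ∈ V')) ?hmaps]
  case hmaps =>
    intro E' hE'
    rw [Finset.mem_coe, Set.Finite.mem_toFinset] at hE'
    obtain ⟨hsub, hcov, hc1, hc2⟩ := hE'
    rw [Finset.mem_coe, Finset.mem_filter, Finset.mem_powerset]
    constructor
    · -- φ E' ⊆ insert v (image w univ)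
      intro u hu
      rw [hφ] at hu
      rw [mem_suppFinset] at hu
      obtain ⟨e, ⟨heE', heE0⟩, hue⟩ := hu
      have huG : u ∈ G₀.verts := SimpleGraph.Subgraph.mem_verts_of_mem_edge heE0 hue
      rw [hverts] at huG
      rcases huG with rfl | ⟨i, rfl⟩
      · exact Finset.mem_insert_self _ _
      · exact Finset.mem_insert_of_mem (Finset.mem_image.mpr ⟨i, Finset.mem_univ _, rfl⟩)
    · -- c ↔ v ∈ φ E'
      constructor
      · intro hc
        obtain ⟨e, he, hve⟩ := hc1 hc
        rw [hφ, mem_suppFinset]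
        refine ⟨e, ⟨he, ?_⟩, hve⟩
        rcases hsub he with h0 | hi
        · exact h0
        · obtain ⟨i, hi⟩ := Set.mem_iUnion.mp hi
          exact absurd hve (hvE i e hi)
      · intro hv
        by_contra hc
        rw [hφ, mem_suppFinset] at hv
        obtain ⟨e, ⟨he, _⟩, hve⟩ := hv
        exact hc2 hc e he hve
  refine Finset.sum_congr rfl fun V' hV' => ?_
  rw [Finset.mem_filter, Finset.mem_powerset] at hV'
  obtain ⟨hV'sub, hV'c⟩ := hV'
  -- characterize the fiber
  have hglue := ncard_glue (V := V) E0 (fun i => (H i).edgeSet) hd0E hedisj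
    (fun F => F ⊆ E0 ∧ {u | ∃ e ∈ F, u ∈ e} = (↑V' : Set V))
    (fun i F => F ⊆ (H i).edgeSet ∧ (∀ u ∈ (H i).verts, u ≠ w i → ∃ e ∈ F, u ∈ e)
      ∧ (w i ∉ V' → ∃ e ∈ F, w i ∈ e))
    (fun F hF => hF.1) (fun i F hF => hF.1)
  have h3 : (Finset.filter (fun E' => φ E' = V') (Set.toFinite S).toFinset).card =
      {E' : Set (Sym2 V) |
        ((E' ∩ E0) ⊆ E0 ∧ {u | ∃ e ∈ E' ∩ E0, u ∈ e} = (↑V' : Set V)) ∧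
        (∀ i, (E' ∩ (H i).edgeSet) ⊆ (H i).edgeSet ∧
          (∀ u ∈ (H i).verts, u ≠ w i → ∃ e ∈ E' ∩ (H i).edgeSet, u ∈ e) ∧
          (w i ∉ V' → ∃ e ∈ E' ∩ (H i).edgeSet, w i ∈ e)) ∧
        E' ⊆ E0 ∪ ⋃ i, (H i).edgeSet}.ncard := by
    rw [Set.ncard_eq_toFinset_card _ (Set.toFinite _)]
    congr 1
    ext E'
    simp only [Finset.mem_filter, Set.Finite.mem_toFinset]
    constructor
    · rintro ⟨hE'S, hφE'⟩
      rw [hS, Set.mem_setOf_eq] at hE'S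
      obtain ⟨hsub, hcov, hc1, hc2⟩ := hE'S
      rw [hφeq] at hφE'
      refine ⟨⟨Set.inter_subset_right, hφE'⟩, fun i => ⟨Set.inter_subset_right, ?_, ?_⟩, hsub⟩
      · intro u hu hune
        have hunv : u ≠ v := fun h => hvH i (h ▸ hu)
        obtain ⟨e, he, hue⟩ := hcov u (Or.inr (Set.mem_iUnion.mpr ⟨i, hu⟩)) hunv
        refine ⟨e, ⟨he, ?_⟩, hue⟩
        rcases hsub he with h0 | hj
        · exact absurd (hmeet' i u hu (SimpleGraph.Subgraph.mem_verts_of_mem_edge h0 hue)) hune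
        · obtain ⟨j, hj⟩ := Set.mem_iUnion.mp hj
          rcases eq_or_ne j i with rfl | hji
          · exact hj
          · have : u ∈ (H i).verts ∩ (H j).verts :=
              ⟨hu, SimpleGraph.Subgraph.mem_verts_of_mem_edge hj hue⟩
            rw [hvdisj i j (Ne.symm hji)] at this
            exact absurd this (Set.notMem_empty u)
      · intro hwV'
        obtain ⟨e, he, hwe⟩ := hcov (w i) (Or.inr (Set.mem_iUnion.mpr ⟨i, hsel i⟩)) (hwv i)
        refine ⟨e, ⟨he, ?_⟩, hwe⟩
        rcases hsub he with h0 | hj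
        · have : w i ∈ {u | ∃ e ∈ E' ∩ E0, u ∈ e} := ⟨e, ⟨he, h0⟩, hwe⟩
          rw [hφE'] at this
          exact absurd this hwV'
        · obtain ⟨j, hj⟩ := Set.mem_iUnion.mp hj
          rcases eq_or_ne j i with rfl | hji
          · exact hj
          · have : w i ∈ (H i).verts ∩ (H j).verts :=
              ⟨hsel i, SimpleGraph.Subgraph.mem_verts_of_mem_edge hj hwe⟩
            rw [hvdisj i j (Ne.symm hji)] at this
            exact absurd this (Set.notMem_empty _)
    · rintro ⟨⟨_, hsupp⟩, hPi, hsub⟩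
      have hcovw : ∀ i, ∃ e ∈ E', w i ∈ e := by
        intro i
        by_cases hwV' : w i ∈ V'
        · have : w i ∈ {u | ∃ e ∈ E' ∩ E0, u ∈ e} := by rw [hsupp]; exact hwV'
          obtain ⟨e, ⟨he, _⟩, hwe⟩ := this
          exact ⟨e, he, hwe⟩
        · obtain ⟨e, ⟨he, _⟩, hwe⟩ := (hPi i).2.2 hwV'
          exact ⟨e, he, hwe⟩
      refine ⟨?_, (hφeq _ _).mpr hsupp⟩
      rw [hS, Set.mem_setOf_eq]
      refine ⟨hsub, ?_, ?_, ?_⟩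
      · intro u hu hunv
        rcases hu with huG | huH
        · rw [hverts] at huG
          rcases huG with rfl | ⟨i, rfl⟩
          · exact absurd rfl hunv
          · exact hcovw i
        · obtain ⟨i, hu⟩ := Set.mem_iUnion.mp huH
          rcases eq_or_ne u (w i) with rfl | hune
          · exact hcovw i
          · obtain ⟨e, ⟨he, _⟩, hue⟩ := (hPi i).2.1 u hu hune
            exact ⟨e, he, hue⟩
      · intro hc
        have hvV' : v ∈ V' := hV'c.mp hc
        have : v ∈ {u | ∃ e ∈ E' ∩ E0, u ∈ e} := by rw [hsupp]; exact hvV'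
        obtain ⟨e, ⟨he, _⟩, hve⟩ := this
        exact ⟨e, he, hve⟩
      · intro hc e he hve
        have hvV' : v ∉ V' := fun h => hc (hV'c.mpr h)
        rcases hsub he with h0 | hj
        · have : v ∈ {u | ∃ e ∈ E' ∩ E0, u ∈ e} := ⟨e, ⟨he, h0⟩, hve⟩
          rw [hsupp] at this
          exact hvV' this
        · obtain ⟨j, hj⟩ := Set.mem_iUnion.mp hj
          exact hvE j e hj hve
  rw [h3, hglue]
  congr 1
  · -- first factor
    have : {F : Set (Sym2 V) | F ⊆ E0 ∧ {u | ∃ e ∈ F, u ∈ e} = (↑V' : Set V)}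
        = {F : Set (Sym2 V) | F ⊆ (G₀.induce (↑V' : Set V)).edgeSet ∧
            ∀ u ∈ (G₀.induce (↑V' : Set V)).verts, ∃ e ∈ F, u ∈ e} := by
      ext F
      simp only [Set.mem_setOf_eq, SimpleGraph.Subgraph.induce_verts]
      constructor
      · rintro ⟨hFE, hsupp⟩
        refine ⟨fun e he => ?_, fun u hu => by rw [← hsupp] at hu; exact hu⟩
        rw [mem_edgeSet_induce]
        exact ⟨hFE he, fun u hu => by rw [← hsupp]; exact ⟨e, he, hu⟩⟩
      · rintro ⟨hFE, hcov⟩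
        refine ⟨fun e he => ((mem_edgeSet_induce G₀ _ e).mp (hFE he)).1, ?_⟩
        apply Set.Subset.antisymm
        · rintro u ⟨e, he, hue⟩
          exact ((mem_edgeSet_induce G₀ _ e).mp (hFE he)).2 u hue
        · exact hcov
    rw [this, alphaCount]
  · -- product factors
    refine Finset.prod_congr rfl fun i _ => ?_
    by_cases hwi : w i ∈ V'
    · rw [if_pos hwi]
      have : {F : Set (Sym2 V) | F ⊆ (H i).edgeSet ∧
            (∀ u ∈ (H i).verts, u ≠ w i → ∃ e ∈ F, u ∈ e) ∧ (w i ∉ V' → ∃ e ∈ F, w i ∈ e)}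
          = {F | F ⊆ (H i).edgeSet ∧ ∀ u ∈ (H i).verts, u ≠ w i → ∃ e ∈ F, u ∈ e} := by
        ext F
        simp only [Set.mem_setOf_eq]
        exact ⟨fun h => ⟨h.1, h.2.1⟩, fun h => ⟨h.1, h.2, fun hn => absurd hwi hn⟩⟩
      rw [this, ncard_cover_except (H i) (w i) (hsel i)]
    · rw [if_neg hwi]
      have : {F : Set (Sym2 V) | F ⊆ (H i).edgeSet ∧
            (∀ u ∈ (H i).verts, u ≠ w i → ∃ e ∈ F, u ∈ e) ∧ (w i ∉ V' → ∃ e ∈ F, w i ∈ e)}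
          = {F | F ⊆ (H i).edgeSet ∧ ∀ u ∈ (H i).verts, ∃ e ∈ F, u ∈ e} := by
        ext F
        simp only [Set.mem_setOf_eq]
        constructor
        · rintro ⟨hFE, h1, h2⟩
          refine ⟨hFE, fun u hu => ?_⟩
          rcases eq_or_ne u (w i) with rfl | hune
          · exact h2 hwi
          · exact h1 u hu hune
        · rintro ⟨hFE, h⟩
          exact ⟨hFE, fun u hu _ => h u hu, fun _ => h (w i) (hsel i)⟩
      rw [this, alphaCount]

end Master

/-- Let `G₀` be a connected graph with vertex set `V₀ = {v, w 1, …, w n}` and selected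
vertex `v`, and for each `i` let `Hᵢ` be a graph with selected vertex `w i`, the graphs
`Hᵢ` pairwise sharing no vertices and no edges, and `Hᵢ ∩ G₀ = {w i}`.  Let
`G = G₀ ∪ H₁ ∪ ⋯ ∪ Hₙ` and `f(Hᵢ, wᵢ, X) = s(Hᵢ, wᵢ)` if `wᵢ ∈ X`, else `α(Hᵢ)`.  Then
(1) `α(G) = Σ_{V' ⊆ V₀, v ∈ V'} α(G₀(V')) ∏ᵢ f(Hᵢ, wᵢ, V')` and
(2) `β(G, v) = Σ_{V' ⊆ V₀, v ∉ V'} α(G₀(V')) ∏ᵢ f(Hᵢ, wᵢ, V')`,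
where `G₀(V')` is the induced subgraph of `G₀` on `V'`. -/
theorem glueing_to_atomic_graph {V : Type*} [Fintype V] [DecidableEq V]
    (G₀ : (⊤ : SimpleGraph V).Subgraph) (v : V) (n : ℕ) (w : Fin n → V)
    (hw : Function.Injective w) (hwv : ∀ i, w i ≠ v)
    (hverts : G₀.verts = insert v (Set.range w))
    (hconn : G₀.Connected)
    (H : Fin n → (⊤ : SimpleGraph V).Subgraph)
    (hsel : ∀ i, w i ∈ (H i).verts)
    (hvdisj : ∀ i j, i ≠ j → (H i).verts ∩ (H j).verts = ∅)
    (hedisj : ∀ i j, i ≠ j → (H i).edgeSet ∩ (H j).edgeSet = ∅)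
    (hmeet : ∀ i, (H i).verts ∩ G₀.verts = {w i}) :
    alphaCount (G₀ ⊔ ⨆ i, H i) =
      ∑ V' ∈ (insert v (Finset.image w Finset.univ)).powerset.filter (fun V' => v ∈ V'),
        alphaCount (G₀.induce ↑V') *
          ∏ i, (if w i ∈ V' then sCount (H i) (w i) else alphaCount (H i)) ∧
    betaCount (G₀ ⊔ ⨆ i, H i) v =
      ∑ V' ∈ (insert v (Finset.image w Finset.univ)).powerset.filter (fun V' => v ∉ V'),
        alphaCount (G₀.induce ↑V') *
          ∏ i, (if w i ∈ V' then sCount (H i) (w i) else alphaCount (H i)) := by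
  classical
  have hvG : v ∈ G₀.verts := by rw [hverts]; exact Set.mem_insert _ _
  have hedge : (G₀ ⊔ ⨆ i, H i).edgeSet = G₀.edgeSet ∪ ⋃ i, (H i).edgeSet := by
    rw [SimpleGraph.Subgraph.edgeSet_sup, SimpleGraph.Subgraph.edgeSet_iSup]
  have hverts' : (G₀ ⊔ ⨆ i, H i).verts = G₀.verts ∪ ⋃ i, (H i).verts := by
    rw [SimpleGraph.Subgraph.verts_sup, SimpleGraph.Subgraph.verts_iSup]
  constructor
  · rw [alphaCount]
    have hset : {E' | E' ⊆ (G₀ ⊔ ⨆ i, H i).edgeSet ∧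
          ∀ u ∈ (G₀ ⊔ ⨆ i, H i).verts, ∃ e ∈ E', u ∈ e}
        = {E' : Set (Sym2 V) | E' ⊆ G₀.edgeSet ∪ ⋃ i, (H i).edgeSet ∧
            (∀ u ∈ G₀.verts ∪ ⋃ i, (H i).verts, u ≠ v → ∃ e ∈ E', u ∈ e) ∧
            (True → ∃ e ∈ E', v ∈ e) ∧ (¬True → ∀ e ∈ E', v ∉ e)} := by
      ext E'
      rw [Set.mem_setOf_eq, Set.mem_setOf_eq, hedge, hverts']
      constructor
      · rintro ⟨h1, h2⟩
        exact ⟨h1, fun u hu _ => h2 u hu, fun _ => h2 v (Or.inl hvG), fun h => absurd trivial h⟩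
      · rintro ⟨h1, h2, h3, _⟩
        refine ⟨h1, fun u hu => ?_⟩
        rcases eq_or_ne u v with rfl | hne
        · exact h3 trivial
        · exact h2 u hu hne
    rw [hset, master_count G₀ v n w hwv hverts H hsel hvdisj hedisj hmeet True]
    refine Finset.sum_congr ?_ fun _ _ => rfl
    apply Finset.filter_congr
    intro V' _
    simp
  · rw [betaCount, alphaCount]
    have hset : {E' | E' ⊆ ((G₀ ⊔ ⨆ i, H i).deleteVerts {v}).edgeSet ∧
          ∀ u ∈ ((G₀ ⊔ ⨆ i, H i).deleteVerts {v}).verts, ∃ e ∈ E', u ∈ e}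
        = {E' : Set (Sym2 V) | E' ⊆ G₀.edgeSet ∪ ⋃ i, (H i).edgeSet ∧
            (∀ u ∈ G₀.verts ∪ ⋃ i, (H i).verts, u ≠ v → ∃ e ∈ E', u ∈ e) ∧
            (False → ∃ e ∈ E', v ∈ e) ∧ (¬False → ∀ e ∈ E', v ∉ e)} := by
      ext E'
      rw [Set.mem_setOf_eq, Set.mem_setOf_eq]
      simp only [SimpleGraph.Subgraph.deleteVerts_verts]
      constructor
      · rintro ⟨h1, h2⟩
        refine ⟨?_, ?_, fun h => absurd h (not_false), ?_⟩
        · intro e he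
          have := (mem_edgeSet_deleteVerts _ v e).mp (h1 he)
          rw [hedge] at this
          exact this.1
        · intro u hu hne
          refine h2 u ?_
          rw [hverts']
          exact ⟨hu, by simp [hne]⟩
        · intro _ e he hv
          exact ((mem_edgeSet_deleteVerts _ v e).mp (h1 he)).2 hv
      · rintro ⟨h1, h2, _, h4⟩
        refine ⟨?_, ?_⟩
        · intro e he
          rw [mem_edgeSet_deleteVerts, hedge]
          exact ⟨h1 he, h4 not_false e he⟩
        · intro u hu
          rw [hverts'] at hu
          obtain ⟨hu1, hu2⟩ := hu
          exact h2 u hu1 (by simpa using hu2)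
    rw [hset, master_count G₀ v n w hwv hverts H hsel hvdisj hedisj hmeet False]
    refine Finset.sum_congr ?_ fun _ _ => rfl
    apply Finset.filter_congr
    intro V' _
    simp
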